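/- Let n be a positive integer not divisible by 3. For every (3,n)-Dyck path Π, area(Π) + skips(Π) + dinv(Π) = n − 1. -/

import Mathlib

open MvPolynomial

/-- An `(m,n)`-Dyck path: a north/east lattice path from `(0,0)` to `(m,n)` staying
weakly above the diagonal `y = (n/m)x`.  Such a path is encoded by recording, for each
of the `m` columns (indexed `0,…,m-1` from left to right), the number of cells of that
column lying above the path; this gives an antitone sequence, and the diagonal
condition for the east step in column `i` reads `m * c i ≤ n * (m - 1 - i)`. -/
def DyckPath (m n : ℕ) : Type :=
  {c : Fin m → Fin (n + 1) //
    (∀ i j : Fin m, i ≤ j → (c j : ℕ) ≤ (c i : ℕ)) ∧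
      ∀ i : Fin m, m * (c i : ℕ) ≤ n * (m - 1 - (i : ℕ))}

noncomputable instance instFintypeDyckPath (m n : ℕ) : Fintype (DyckPath m n) := by
  classical
  unfold DyckPath
  infer_instance

namespace DyckPath

variable {m n : ℕ}

/-- `λ(Π)`, the set of cells of the `m × n` lattice lying above the path `Π`.
The cell `(i, j)` (with `i : Fin m`, `j : Fin n`) is the cell in column `i + 1`
(from the left) and row `j + 1` (from the bottom) in the paper's 1-based indexing. -/
def cellsAbove (P : DyckPath m n) : Set (Fin m × Fin n) :=
  {x | n - (P.1 x.1 : ℕ) ≤ (x.2 : ℕ)}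

/-- `arm(x)`: the number of cells of `λ(Π)` strictly east of `x` (in the row of `x`). -/
noncomputable def arm (P : DyckPath m n) (x : Fin m × Fin n) : ℕ :=
  {y ∈ P.cellsAbove | x.1 < y.1 ∧ y.2 = x.2}.ncard

/-- `leg(x)`: the number of cells of `λ(Π)` strictly south of `x` (in the column of `x`). -/
noncomputable def leg (P : DyckPath m n) (x : Fin m × Fin n) : ℕ :=
  {y ∈ P.cellsAbove | y.1 = x.1 ∧ y.2 < x.2}.ncard

end DyckPath

/-- The dinv condition `arm/(leg+1) < m/n < (arm+1)/leg` for a cell with given arm `a`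
and leg `l`, the right inequality being interpreted as true when `l = 0`. -/
def dinvCond (m n a l : ℕ) : Prop :=
  (a : ℚ) / ((l : ℚ) + 1) < (m : ℚ) / (n : ℚ) ∧
    (l = 0 ∨ (m : ℚ) / (n : ℚ) < ((a : ℚ) + 1) / (l : ℚ))

namespace DyckPath

variable {m n : ℕ}

/-- `dinv(Π)`: the number of cells `x ∈ λ(Π)` with
`arm(x)/(leg(x)+1) < m/n < (arm(x)+1)/leg(x)`. -/
noncomputable def dinv (P : DyckPath m n) : ℕ :=
  {x ∈ P.cellsAbove | dinvCond m n (P.arm x) (P.leg x)}.ncard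

/-- `area(Π)`: the number of cells of the lattice lying entirely between the path and
the diagonal, i.e. cells lying entirely weakly above the diagonal `y = (n/m)x` and
below the path. -/
noncomputable def area (P : DyckPath m n) : ℕ :=
  {x : Fin m × Fin n | n * ((x.1 : ℕ) + 1) ≤ m * (x.2 : ℕ) ∧ x ∉ P.cellsAbove}.ncard

end DyckPath

/-- The `(m,n)`-rational `q,t`-Catalan polynomial `C_{m,n}(q,t)`, with `q = X 0` and
`t = X 1`:  `C_{m,n}(q,t) = Σ_Π q^{dinv(Π)} t^{area(Π)}` over all `(m,n)`-Dyck paths. -/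
noncomputable def ratCatalan (m n : ℕ) : MvPolynomial (Fin 2) ℤ :=
  ∑ P : DyckPath m n, X 0 ^ P.dinv * X 1 ^ P.area

/-- The rank of the cell `(i, j)` of the `3 × n` lattice: in the paper's 1-based
coordinates `(a, b) = (i+1, j+1)`, this is `R(a,b) = -a·n + 3(b-1)`. -/
def cellRank (n : ℕ) (x : Fin 3 × Fin n) : ℤ :=
  3 * (x.2 : ℤ) - ((x.1 : ℤ) + 1) * (n : ℤ)

/-- The set of positive ranks of the `3 × n` lattice: these, in increasing order, are
the entries of the rank word. -/
def posRank (n : ℕ) : Set ℤ :=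
  {r | 0 < r ∧ ∃ x : Fin 3 × Fin n, cellRank n x = r}

/-- The set of marked ranks of a `(3,n)`-Dyck path: the ranks of the cells above
the path. -/
def markedRank {n : ℕ} (P : DyckPath 3 n) : Set ℤ :=
  cellRank n '' P.cellsAbove

/-- `skips(Π)`: the number of skips of `Π`, i.e. of maximal blocks of consecutive
unmarked entries of the rank word of `Π` having at least one marked entry to the left
and at least one marked entry to the right.  Each such block is counted through its
rightmost entry `r`: `r` is an unmarked entry, some marked entry lies to its left, and
the next entry of the rank word after `r` is marked. -/
noncomputable def DyckPath.skips {n : ℕ} (P : DyckPath 3 n) : ℕ :=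
  {r : ℤ | r ∈ posRank n ∧ r ∉ markedRank P ∧
    (∃ l ∈ markedRank P, l < r) ∧
    ∃ s ∈ markedRank P, r < s ∧ ∀ t ∈ posRank n, r < t → s ≤ t}.ncard


section Aux

open Finset

lemma cardH1 (N lo hi : ℕ) :
    ((range N).filter (fun k => lo ≤ k ∧ k < hi)).card = min hi N - lo := by
  have h : (range N).filter (fun k => lo ≤ k ∧ k < hi) = Finset.Ico lo (min hi N) := by
    ext k; simp only [Finset.mem_filter, Finset.mem_range, Finset.mem_Ico]; omega
  rw [h, Nat.card_Ico]

lemma cardH2 (N lo e : ℕ) (he : e < 3) :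
    ((range N).filter (fun k => lo ≤ k ∧ k % 3 = e)).card
      = (N + 2 - e) / 3 - (lo + 2 - e) / 3 := by
  induction N with
  | zero => simp; omega
  | succ N ih =>
    rw [Finset.range_add_one, Finset.filter_insert]
    by_cases h : lo ≤ N ∧ N % 3 = e
    · rw [if_pos h, Finset.card_insert_of_notMem (by simp), ih]
      omega
    · rw [if_neg h, ih]
      push_neg at h
      rcases Nat.lt_or_ge N lo with h2 | h2
      · omega
      · have := h h2; omega

lemma ncard_fin3 (n : ℕ) (q : ℕ → ℕ → Prop) [∀ i j, Decidable (q i j)] :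
    {x : Fin 3 × Fin n | q (x.1 : ℕ) (x.2 : ℕ)}.ncard =
      ((range n).filter (q 0)).card + ((range n).filter (q 1)).card
        + ((range n).filter (q 2)).card := by
  classical
  rw [Set.ncard_eq_toFinset_card', Set.toFinset_setOf]
  rw [Finset.card_filter, Fintype.sum_prod_type, Fin.sum_univ_three]
  simp only [Finset.card_filter, ← Fin.sum_univ_eq_sum_range]
  norm_num

lemma mem_posRank_iff (n : ℕ) (r : ℤ) :
    r ∈ posRank n ↔
      0 < r ∧ ((3 ∣ r + n ∧ r ≤ 2 * n - 3) ∨ (3 ∣ r + 2 * n ∧ r ≤ n - 3)) := by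
  constructor
  · rintro ⟨hr, ⟨⟨i, hi⟩, ⟨j, hj⟩⟩, hx⟩
    refine ⟨hr, ?_⟩
    simp only [cellRank] at hx
    interval_cases i
    · left; constructor
      · exact ⟨j, by push_cast at hx ⊢; linarith⟩
      · push_cast at hx; omega
    · right; constructor
      · exact ⟨j, by push_cast at hx ⊢; linarith⟩
      · push_cast at hx; omega
    · exfalso; push_cast at hx; omega
  · rintro ⟨hr, h | h⟩
    · obtain ⟨⟨k, hk⟩, hle⟩ := h
      refine ⟨hr, ⟨⟨0, by norm_num⟩, ⟨k.toNat, by omega⟩⟩, ?_⟩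
      simp only [cellRank]
      push_cast
      rw [Int.toNat_of_nonneg (by omega)]
      omega
    · obtain ⟨⟨k, hk⟩, hle⟩ := h
      refine ⟨hr, ⟨⟨1, by norm_num⟩, ⟨k.toNat, by omega⟩⟩, ?_⟩
      simp only [cellRank]
      push_cast
      rw [Int.toNat_of_nonneg (by omega)]
      omega

lemma mem_markedRank_iff {n : ℕ} (P : DyckPath 3 n) (h2 : (P.1 2 : ℕ) = 0)
    (r : ℤ) :
    r ∈ markedRank P ↔
      (3 ∣ r + n ∧ 2 * n - 3 * (P.1 0 : ℕ) ≤ r ∧ r ≤ 2 * n - 3) ∨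
        (3 ∣ r + 2 * n ∧ (n : ℤ) - 3 * (P.1 1 : ℕ) ≤ r ∧ r ≤ n - 3) := by
  have han : (P.1 0 : ℕ) ≤ n := by have := (P.1 0).isLt; omega
  have hbn : (P.1 1 : ℕ) ≤ n := by have := (P.1 1).isLt; omega
  constructor
  · rintro ⟨⟨⟨i, hi⟩, ⟨j, hj⟩⟩, habove, hx⟩
    simp only [DyckPath.cellsAbove, Set.mem_setOf_eq] at habove
    simp only [cellRank] at hx
    interval_cases i
    · have h0 : P.1 ⟨0, by norm_num⟩ = P.1 0 := rfl
      rw [h0] at habove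
      left
      refine ⟨⟨j, by push_cast at hx ⊢; linarith⟩, ?_, ?_⟩ <;> push_cast at hx ⊢ <;> omega
    · have h0 : P.1 ⟨1, by norm_num⟩ = P.1 1 := rfl
      rw [h0] at habove
      right
      refine ⟨⟨j, by push_cast at hx ⊢; linarith⟩, ?_, ?_⟩ <;> push_cast at hx ⊢ <;> omega
    · have h0 : P.1 ⟨2, by norm_num⟩ = P.1 2 := rfl
      rw [h0, h2] at habove
      omega
  · rintro (⟨⟨k, hk⟩, hlo, hhi⟩ | ⟨⟨k, hk⟩, hlo, hhi⟩)
    · refine ⟨⟨0, ⟨k.toNat, by omega⟩⟩, ?_, ?_⟩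
      · simp only [DyckPath.cellsAbove, Set.mem_setOf_eq]
        omega
      · simp only [cellRank]; push_cast; omega
    · refine ⟨⟨1, ⟨k.toNat, by omega⟩⟩, ?_, ?_⟩
      · simp only [DyckPath.cellsAbove, Set.mem_setOf_eq]
        omega
      · simp only [cellRank]; push_cast; omega

lemma dinvCond_iff (n A L : ℕ) (hn : 0 < n) :
    dinvCond 3 n A L ↔ (A * n < 3 * L + 3 ∧ (L = 0 ∨ 3 * L < (A + 1) * n)) := by
  have h1 : (0:ℚ) < (L:ℚ) + 1 := by positivity
  have h2 : (0:ℚ) < (n:ℚ) := by exact_mod_cast hn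
  unfold dinvCond
  rw [div_lt_div_iff₀ h1 h2]
  push_cast
  constructor
  · rintro ⟨hl, hr⟩
    refine ⟨by exact_mod_cast (by linarith : (A:ℚ) * n < 3 * L + 3), ?_⟩
    rcases hr with h | h
    · exact Or.inl h
    · rcases Nat.eq_zero_or_pos L with hL | hL
      · exact Or.inl hL
      · right
        have hLq : (0:ℚ) < (L:ℚ) := by exact_mod_cast hL
        rw [div_lt_div_iff₀ h2 hLq] at h
        exact_mod_cast (by linarith : 3 * (L:ℚ) < ((A:ℚ) + 1) * n)
  · rintro ⟨hl, hr⟩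
    have hlq : (A:ℚ) * n < 3 * L + 3 := by exact_mod_cast hl
    refine ⟨by linarith, ?_⟩
    rcases hr with h | h
    · exact Or.inl h
    · rcases Nat.eq_zero_or_pos L with hL | hL
      · exact Or.inl hL
      · right
        have hLq : (0:ℚ) < (L:ℚ) := by exact_mod_cast hL
        rw [div_lt_div_iff₀ h2 hLq]
        have : 3 * (L:ℚ) < ((A:ℚ) + 1) * n := by exact_mod_cast h
        linarith

end Aux

set_option maxHeartbeats 4000000 in
/-- For every `(3,n)`-Dyck path `Π` (with `3 ∤ n`),
`area(Π) + skips(Π) + dinv(Π) = n − 1`. -/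
theorem area_add_skips_add_dinv (n : ℕ) (hn : 0 < n) (h3 : ¬ (3 ∣ n))
    (P : DyckPath 3 n) :
    P.area + P.skips + P.dinv = n - 1 := by
  classical
  open Finset in
  have hm : n % 3 ≠ 0 := fun h => h3 (Nat.dvd_of_mod_eq_zero h)
  have hba : (P.1 1 : ℕ) ≤ (P.1 0 : ℕ) := P.2.1 0 1 (by decide)
  have hd0 : 3 * (P.1 0 : ℕ) ≤ 2 * n := by
    have h := P.2.2 0; norm_num at h; omega
  have hd1 : 3 * (P.1 1 : ℕ) ≤ n := by
    have h := P.2.2 1; norm_num at h; omega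
  have h2 : (P.1 2 : ℕ) = 0 := by
    have h : 3 * (P.1 2 : ℕ) ≤ n * (3 - 1 - 2) := P.2.2 2
    rw [show 3 - 1 - 2 = 0 from rfl, mul_zero] at h; omega
  have han : (P.1 0 : ℕ) ≤ n := by have := (P.1 0).isLt; omega
  have hbn : (P.1 1 : ℕ) ≤ n := by have := (P.1 1).isLt; omega
  set a := (P.1 0 : ℕ) with ha_def
  set b := (P.1 1 : ℕ) with hb_def
  -- AREA --
  have harea : P.area = (min (n - a) n - (n + 2) / 3) + (min (n - b) n - (2 * n + 2) / 3) := by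
    have hset : {x : Fin 3 × Fin n | n * ((x.1 : ℕ) + 1) ≤ 3 * (x.2 : ℕ) ∧ x ∉ P.cellsAbove}
        = {x : Fin 3 × Fin n | (fun i j => (i = 0 ∧ n ≤ 3 * j ∧ j + a < n)
            ∨ (i = 1 ∧ 2 * n ≤ 3 * j ∧ j + b < n)) (x.1 : ℕ) (x.2 : ℕ)} := by
      ext ⟨⟨i, hi⟩, j⟩
      simp only [Set.mem_setOf_eq, DyckPath.cellsAbove]
      interval_cases i
      · have h0 : P.1 ⟨0, by norm_num⟩ = P.1 0 := rfl
        rw [h0]; simp only [Fin.mk_zero]; norm_num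
        exact fun _ => Iff.rfl
      · have h0 : P.1 ⟨1, by norm_num⟩ = P.1 1 := rfl
        rw [h0]; norm_num; omega
      · have h0 : P.1 ⟨2, by norm_num⟩ = P.1 2 := rfl
        rw [h0, h2]; norm_num
        have := j.isLt; omega
    rw [DyckPath.area, hset, ncard_fin3 n (fun i j => (i = 0 ∧ n ≤ 3 * j ∧ j + a < n)
            ∨ (i = 1 ∧ 2 * n ≤ 3 * j ∧ j + b < n))]
    have e0 : (range n).filter (fun j => ((0:ℕ) = 0 ∧ n ≤ 3 * j ∧ j + a < n)
          ∨ ((0:ℕ) = 1 ∧ 2 * n ≤ 3 * j ∧ j + b < n))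
        = (range n).filter (fun j => (n + 2) / 3 ≤ j ∧ j < n - a) :=
      Finset.filter_congr (by intro j hj; simp only [Finset.mem_range] at hj; omega)
    have e1 : (range n).filter (fun j => ((1:ℕ) = 0 ∧ n ≤ 3 * j ∧ j + a < n)
          ∨ ((1:ℕ) = 1 ∧ 2 * n ≤ 3 * j ∧ j + b < n))
        = (range n).filter (fun j => (2 * n + 2) / 3 ≤ j ∧ j < n - b) :=
      Finset.filter_congr (by intro j hj; simp only [Finset.mem_range] at hj; omega)
    have e2 : (range n).filter (fun j => ((2:ℕ) = 0 ∧ n ≤ 3 * j ∧ j + a < n)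
          ∨ ((2:ℕ) = 1 ∧ 2 * n ≤ 3 * j ∧ j + b < n))
        = ∅ :=
      Finset.filter_false_of_mem (by intro j hj; omega)
    rw [e0, e1, e2, cardH1, cardH1]
    simp
  have harea' : P.area = n - 1 - a - b := by
    rw [min_eq_left (by omega), min_eq_left (by omega)] at harea
    omega
  clear harea
  -- ARM and LEG --
  have harm1 : ∀ j : Fin n, P.arm (1, j) = 0 := by
    intro j
    have hset : {y ∈ P.cellsAbove | ((1 : Fin 3), j).1 < y.1 ∧ y.2 = ((1 : Fin 3), j).2} = ∅ := by
      ext ⟨⟨i, hi⟩, j'⟩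
      simp only [Set.mem_sep_iff, Set.mem_setOf_eq, DyckPath.cellsAbove, Fin.lt_def,
        Set.mem_empty_iff_false, iff_false, not_and]
      interval_cases i
      · intro _ h; norm_num at h
      · intro _ h; norm_num at h
      · have h0 : P.1 ⟨2, by norm_num⟩ = P.1 2 := rfl
        rw [h0, h2]; intro h; omega
    rw [DyckPath.arm, hset, Set.ncard_empty]
  have harm0 : ∀ j : Fin n, n - b ≤ (j : ℕ) → P.arm (0, j) = 1 := by
    intro j hj
    have hset : {y ∈ P.cellsAbove | ((0 : Fin 3), j).1 < y.1 ∧ y.2 = ((0 : Fin 3), j).2}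
        = {((1 : Fin 3), j)} := by
      ext ⟨⟨i, hi⟩, j'⟩
      simp only [Set.mem_sep_iff, Set.mem_setOf_eq, DyckPath.cellsAbove, Fin.lt_def,
        Set.mem_singleton_iff, Prod.ext_iff, Fin.ext_iff]
      interval_cases i
      · norm_num
      · have h0 : P.1 ⟨1, by norm_num⟩ = P.1 1 := rfl
        rw [h0]
        norm_num
        omega
      · have h0 : P.1 ⟨2, by norm_num⟩ = P.1 2 := rfl
        rw [h0, h2]
        norm_num
    rw [DyckPath.arm, hset, Set.ncard_singleton]
  have harm0' : ∀ j : Fin n, (j : ℕ) < n - b → P.arm (0, j) = 0 := by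
    intro j hj
    have hset : {y ∈ P.cellsAbove | ((0 : Fin 3), j).1 < y.1 ∧ y.2 = ((0 : Fin 3), j).2} = ∅ := by
      ext ⟨⟨i, hi⟩, j'⟩
      simp only [Set.mem_sep_iff, Set.mem_setOf_eq, DyckPath.cellsAbove, Fin.lt_def,
        Set.mem_empty_iff_false, iff_false, not_and, Prod.ext_iff, Fin.ext_iff]
      interval_cases i
      · intro _ h; norm_num at h
      · have h0 : P.1 ⟨1, by norm_num⟩ = P.1 1 := rfl
        rw [h0]
        intro hab _ hj'; omega
      · have h0 : P.1 ⟨2, by norm_num⟩ = P.1 2 := rfl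
        rw [h0, h2]
        intro hab; omega
    rw [DyckPath.arm, hset, Set.ncard_empty]
  have hleg : ∀ (i0 : Fin 3) (j : Fin n), P.leg (i0, j) = (j : ℕ) - (n - (P.1 i0 : ℕ)) := by
    intro i0 j
    have hset : {y ∈ P.cellsAbove | y.1 = (i0, j).1 ∧ y.2 < (i0, j).2}
        = {x : Fin 3 × Fin n | (fun i' j' => i' = (i0 : ℕ) ∧ n - (P.1 i0 : ℕ) ≤ j' ∧ j' < (j : ℕ))
            (x.1 : ℕ) (x.2 : ℕ)} := by
      ext ⟨i', j'⟩
      simp only [Set.mem_sep_iff, Set.mem_setOf_eq, DyckPath.cellsAbove, Fin.lt_def,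
        Fin.ext_iff]
      constructor
      · rintro ⟨hab, hii, hjj⟩
        have : P.1 i' = P.1 i0 := by rw [show i' = i0 from Fin.ext hii]
        rw [this] at hab
        exact ⟨hii, hab, hjj⟩
      · rintro ⟨hii, hab, hjj⟩
        have hie : i' = i0 := Fin.ext hii
        rw [hie]
        exact ⟨hab, rfl, hjj⟩
    rw [DyckPath.leg, hset, ncard_fin3 n (fun i' j' => i' = (i0 : ℕ) ∧ n - (P.1 i0 : ℕ) ≤ j' ∧ j' < (j : ℕ))]
    have hj := j.isLt
    have hcases : ∀ c : ℕ, ((range n).filter (fun j' => c = (i0 : ℕ) ∧ n - (P.1 i0 : ℕ) ≤ j' ∧ j' < (j : ℕ))).card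
        = if c = (i0 : ℕ) then min (j : ℕ) n - (n - (P.1 i0 : ℕ)) else 0 := by
      intro c
      by_cases hc : c = (i0 : ℕ)
      · rw [if_pos hc]
        rw [show ((range n).filter (fun j' => c = (i0 : ℕ) ∧ n - (P.1 i0 : ℕ) ≤ j' ∧ j' < (j : ℕ)))
            = ((range n).filter (fun j' => n - (P.1 i0 : ℕ) ≤ j' ∧ j' < (j : ℕ))) from
          Finset.filter_congr (by intro k hk; simp [hc])]
        exact cardH1 n _ _
      · rw [if_neg hc]
        rw [Finset.filter_false_of_mem (by intro k hk; simp [hc]), Finset.card_empty]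
    rw [hcases 0, hcases 1, hcases 2]
    have hi0 := i0.isLt
    interval_cases h : (i0 : ℕ) <;> simp <;> omega
  -- DINV --
  have hdinv : P.dinv = (min n n - max (n - b) (n - a + n / 3))
      + (min (min (n - b) (n - a + n / 3 + 1)) n - (n - a)) + (min n n - (n - b)) := by
    have hset : {x ∈ P.cellsAbove | dinvCond 3 n (P.arm x) (P.leg x)}
        = {x : Fin 3 × Fin n | (fun i j =>
            (i = 0 ∧ n - a ≤ j ∧ ((n - b ≤ j ∧ n < 3 * (j - (n - a)) + 3)
              ∨ (j < n - b ∧ (j - (n - a) = 0 ∨ 3 * (j - (n - a)) < n))))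
            ∨ (i = 1 ∧ n - b ≤ j)) (x.1 : ℕ) (x.2 : ℕ)} := by
      ext ⟨⟨i, hi⟩, j⟩
      simp only [Set.mem_sep_iff, Set.mem_setOf_eq, DyckPath.cellsAbove]
      interval_cases i
      · have e : ((⟨0, by norm_num⟩ : Fin 3), j) = ((0 : Fin 3), j) := rfl
        have h0 : P.1 ⟨0, by norm_num⟩ = P.1 0 := rfl
        rw [e, h0]
        by_cases hcase : n - b ≤ (j : ℕ)
        · rw [harm0 j hcase, hleg 0 j, dinvCond_iff n _ _ hn]
          have hj := j.isLt
          norm_num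
          omega
        · rw [harm0' j (by omega), hleg 0 j, dinvCond_iff n _ _ hn]
          have hj := j.isLt
          norm_num
          omega
      · have e : ((⟨1, by norm_num⟩ : Fin 3), j) = ((1 : Fin 3), j) := rfl
        have h0 : P.1 ⟨1, by norm_num⟩ = P.1 1 := rfl
        rw [e, h0, harm1 j, hleg 1 j, dinvCond_iff n _ _ hn]
        have hj := j.isLt
        norm_num
        omega
      · have h0 : P.1 ⟨2, by norm_num⟩ = P.1 2 := rfl
        rw [h0, h2]
        constructor
        · rintro ⟨hab, _⟩; omega
        · rintro (⟨hc, _⟩ | ⟨hc, _⟩) <;> norm_num at hc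
    rw [DyckPath.dinv, hset, ncard_fin3 n (fun i j =>
            (i = 0 ∧ n - a ≤ j ∧ ((n - b ≤ j ∧ n < 3 * (j - (n - a)) + 3)
              ∨ (j < n - b ∧ (j - (n - a) = 0 ∨ 3 * (j - (n - a)) < n))))
            ∨ (i = 1 ∧ n - b ≤ j))]
    have e0 : (range n).filter (fun j => ((0:ℕ) = 0 ∧ n - a ≤ j ∧ ((n - b ≤ j ∧ n < 3 * (j - (n - a)) + 3)
              ∨ (j < n - b ∧ (j - (n - a) = 0 ∨ 3 * (j - (n - a)) < n))))
            ∨ ((0:ℕ) = 1 ∧ n - b ≤ j))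
        = (range n).filter (fun j => (max (n - b) (n - a + n / 3) ≤ j ∧ j < n)
            ∨ (n - a ≤ j ∧ j < min (n - b) (n - a + n / 3 + 1))) :=
      Finset.filter_congr (by intro j hj; simp only [Finset.mem_range] at hj; omega)
    have e1 : (range n).filter (fun j => ((1:ℕ) = 0 ∧ n - a ≤ j ∧ ((n - b ≤ j ∧ n < 3 * (j - (n - a)) + 3)
              ∨ (j < n - b ∧ (j - (n - a) = 0 ∨ 3 * (j - (n - a)) < n))))
            ∨ ((1:ℕ) = 1 ∧ n - b ≤ j))
        = (range n).filter (fun j => n - b ≤ j ∧ j < n) :=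
      Finset.filter_congr (by intro j hj; simp only [Finset.mem_range] at hj; omega)
    have e2 : (range n).filter (fun j => ((2:ℕ) = 0 ∧ n - a ≤ j ∧ ((n - b ≤ j ∧ n < 3 * (j - (n - a)) + 3)
              ∨ (j < n - b ∧ (j - (n - a) = 0 ∨ 3 * (j - (n - a)) < n))))
            ∨ ((2:ℕ) = 1 ∧ n - b ≤ j))
        = ∅ :=
      Finset.filter_false_of_mem (by intro j hj; omega)
    rw [e0, e1, e2, Finset.filter_or, Finset.card_union_of_disjoint (by
        rw [Finset.disjoint_left]
        intro k hk1 hk2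
        simp only [Finset.mem_filter, Finset.mem_range] at hk1 hk2
        omega),
      cardH1, cardH1, cardH1]
    simp only [Finset.card_empty]
    omega
  have hdinv' : P.dinv = b + min (a - b) (n / 3 + 1) + min b (a - n / 3) := by omega
  clear hdinv
  -- SKIPS --
  have hskips : P.skips = ((range (2 * n)).filter (fun k =>
      ((k + n) % 3 = 0 ∧ 1 ≤ b ∧ n < k + 3 * b ∧ k + 3 * a < 2 * n ∧
        (k + 6 ≤ n + n % 3 ∨ (n + n % 3 < k + 6 ∧ 1 ≤ a ∧ k + 3 * a + 3 = 2 * n)))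
      ∨ ((k + 2 * n) % 3 = 0 ∧ 2 * n < k + 3 * a ∧ k + 3 * b < n))).card := by
    have hset : {r : ℤ | r ∈ posRank n ∧ r ∉ markedRank P ∧
        (∃ l ∈ markedRank P, l < r) ∧
        ∃ s ∈ markedRank P, r < s ∧ ∀ t ∈ posRank n, r < t → s ≤ t}
        = (fun k : ℕ => (k : ℤ)) '' ((range (2 * n)).filter (fun k =>
          ((k + n) % 3 = 0 ∧ 1 ≤ b ∧ n < k + 3 * b ∧ k + 3 * a < 2 * n ∧
            (k + 6 ≤ n + n % 3 ∨ (n + n % 3 < k + 6 ∧ 1 ≤ a ∧ k + 3 * a + 3 = 2 * n)))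
          ∨ ((k + 2 * n) % 3 = 0 ∧ 2 * n < k + 3 * a ∧ k + 3 * b < n)) : Finset ℕ) := by
      ext r
      simp only [Set.mem_setOf_eq, Set.mem_image, Finset.mem_coe, Finset.mem_filter,
        Finset.mem_range]
      constructor
      · rintro ⟨hpos, hunm, ⟨l, hl, hlr⟩, ⟨s, hs, hrs, hmin⟩⟩
        rw [mem_posRank_iff] at hpos
        rw [mem_markedRank_iff P h2] at hunm hl hs
        rw [← ha_def, ← hb_def] at hunm hl hs
        obtain ⟨hr0, hcases⟩ := hpos
        refine ⟨r.toNat, ⟨?_, ?_⟩, by omega⟩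
        · omega
        · rcases hcases with ⟨hdvd, hle⟩ | ⟨hdvd, hle⟩
          · -- r in class A
            left
            rcases hs with ⟨hs1, hs2, hs3⟩ | ⟨hs1, hs2, hs3⟩
            · -- s in class A : branch point
              by_cases hu : r + 3 - (n % 3 : ℕ) ≤ (n : ℤ) - 3
              · exfalso
                have hmin1 := hmin (r + 3 - (n % 3 : ℕ))
                  (by rw [mem_posRank_iff]; omega) (by omega)
                omega
              · have hr3 : r + 3 ≤ 2 * (n : ℤ) - 3 := by omega
                have hmin2 := hmin (r + 3) (by rw [mem_posRank_iff]; omega) (by omega)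
                omega
            · -- s in class B
              omega
          · -- r in class B
            right
            omega
      · rintro ⟨k, ⟨hk2n, hcond⟩, rfl⟩
        have hk0 : (0 : ℤ) ≤ (k : ℤ) := by positivity
        refine ⟨?_, ?_, ?_, ?_⟩
        · rw [mem_posRank_iff]; omega
        · rw [mem_markedRank_iff P h2, ← ha_def, ← hb_def]; omega
        · rcases hcond with ⟨_, hb1, hlt, _, _⟩ | ⟨_, hlt, _⟩
          · exact ⟨(n : ℤ) - 3 * b, by rw [mem_markedRank_iff P h2, ← ha_def, ← hb_def]; omega,
              by omega⟩
          · exact ⟨2 * (n : ℤ) - 3 * a, by rw [mem_markedRank_iff P h2, ← ha_def, ← hb_def]; omega,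
              by omega⟩
        · rcases hcond with ⟨hc1, hb1, hlt, hlt2, hbr⟩ | ⟨hc1, hlt, hlt2⟩
          · rcases hbr with hP | hQ
            · refine ⟨(k : ℤ) + 3 - (n % 3 : ℕ),
                by rw [mem_markedRank_iff P h2, ← ha_def, ← hb_def]; omega, by omega, ?_⟩
              intro t ht htr
              rw [mem_posRank_iff] at ht
              omega
            · refine ⟨(k : ℤ) + 3,
                by rw [mem_markedRank_iff P h2, ← ha_def, ← hb_def]; omega, by omega, ?_⟩
              intro t ht htr
              rw [mem_posRank_iff] at ht
              omega
          · refine ⟨(k : ℤ) + (n % 3 : ℕ),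
              by rw [mem_markedRank_iff P h2, ← ha_def, ← hb_def]; omega, by omega, ?_⟩
            intro t ht htr
            rw [mem_posRank_iff] at ht
            omega
    rw [DyckPath.skips, hset, Set.ncard_image_of_injective _ (fun x y h => by exact_mod_cast h),
      Set.ncard_coe_finset]
  -- CASE ANALYSIS --
  rw [harea', hskips, hdinv']
  clear hskips harea' hdinv' harm0 harm0' harm1 hleg
  clear_value a b
  rcases Nat.eq_zero_or_pos b with hb0 | hb1
  · -- Case I : b = 0
    have hfilter : ((range (2 * n)).filter (fun k =>
        ((k + n) % 3 = 0 ∧ 1 ≤ b ∧ n < k + 3 * b ∧ k + 3 * a < 2 * n ∧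
          (k + 6 ≤ n + n % 3 ∨ (n + n % 3 < k + 6 ∧ 1 ≤ a ∧ k + 3 * a + 3 = 2 * n)))
        ∨ ((k + 2 * n) % 3 = 0 ∧ 2 * n < k + 3 * a ∧ k + 3 * b < n)))
        = (range (n - 3 * b)).filter (fun k => 2 * n + 1 - 3 * a ≤ k ∧ k % 3 = n % 3) := by
      ext k
      simp only [Finset.mem_filter, Finset.mem_range]
      omega
    rw [hfilter, cardH2 _ _ _ (by omega)]
    clear hfilter
    omega
  · -- b ≥ 1, so a ≥ 1
    have ha1 : 1 ≤ a := le_trans hb1 hba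
    rcases Nat.lt_or_ge (3 * a) n with han3 | han3
    · -- Case II : 3a < n
      have hfilter : ((range (2 * n)).filter (fun k =>
          ((k + n) % 3 = 0 ∧ 1 ≤ b ∧ n < k + 3 * b ∧ k + 3 * a < 2 * n ∧
            (k + 6 ≤ n + n % 3 ∨ (n + n % 3 < k + 6 ∧ 1 ≤ a ∧ k + 3 * a + 3 = 2 * n)))
          ∨ ((k + 2 * n) % 3 = 0 ∧ 2 * n < k + 3 * a ∧ k + 3 * b < n)))
          = insert (2 * n - 3 * a - 3)
            ((range (n + n % 3 - 5)).filter (fun k => n + 1 - 3 * b ≤ k ∧ k % 3 = 3 - n % 3)) := by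
        ext k
        simp only [Finset.mem_insert, Finset.mem_filter, Finset.mem_range]
        omega
      rw [hfilter, Finset.card_insert_of_notMem (by
          simp only [Finset.mem_filter, Finset.mem_range]; omega),
        cardH2 _ _ _ (by omega)]
      clear hfilter
      omega
    · -- Case III : n ≤ 3a
      have hfilter : ((range (2 * n)).filter (fun k =>
          ((k + n) % 3 = 0 ∧ 1 ≤ b ∧ n < k + 3 * b ∧ k + 3 * a < 2 * n ∧
            (k + 6 ≤ n + n % 3 ∨ (n + n % 3 < k + 6 ∧ 1 ≤ a ∧ k + 3 * a + 3 = 2 * n)))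
          ∨ ((k + 2 * n) % 3 = 0 ∧ 2 * n < k + 3 * a ∧ k + 3 * b < n)))
          = ((range (min (2 * n - 3 * a) (n + n % 3 - 5))).filter
              (fun k => n + 1 - 3 * b ≤ k ∧ k % 3 = 3 - n % 3))
            ∪ ((range (n - 3 * b)).filter (fun k => 2 * n + 1 - 3 * a ≤ k ∧ k % 3 = n % 3)) := by
        ext k
        simp only [Finset.mem_union, Finset.mem_filter, Finset.mem_range]
        omega
      rw [hfilter, Finset.card_union_of_disjoint (by
          rw [Finset.disjoint_left]
          intro k hk1 hk2
          simp only [Finset.mem_filter, Finset.mem_range] at hk1 hk2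
          omega),
        cardH2 _ _ _ (by omega), cardH2 _ _ _ (by omega)]
      clear hfilter
      have hSA : (min (2 * n - 3 * a) (n + n % 3 - 5) + 2 - (3 - n % 3)) / 3
          - (n + 1 - 3 * b + 2 - (3 - n % 3)) / 3 = b - min b (a - n / 3) := by omega
      have hSB : (n - 3 * b + 2 - n % 3) / 3 - (2 * n + 1 - 3 * a + 2 - n % 3) / 3
          = (a - n / 3 - 1) - min (a - n / 3 - 1) b := by omega
      rw [hSA, hSB]
      omega
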